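/- arXiv:2210.14322 — 5 statements merged into one kernel-verified Lean document; each statement's English description precedes it below -/
import Mathlib

section
/- Let P₁, …, P_T be a sequence of preference matrices on K arms such that each P_t admits a Condorcet winner a_t*, and write δ_t(a,b) = P_t(a,b) − 1/2. Define the significant CW switch times recursively: τ̂₀ = 1, and τ̂_{i+1} is the smallest round in (τ̂_i, T) such that for every arm a ∈ [K] there exist rounds τ̂_i ≤ s₁ < s₂ < τ̂_{i+1} with Σ_{t=s₁}^{s₂} δ_t(a_t*, a) ≥ √(K·(s₂ − s₁)), if such a round exists. Let σS denote the number of significant CW switch times τ̂₁, …, τ̂_{σS}, and let S^CW = Σ_{t=2}^T 1{a_t* ≠ a_{t−1}*} denote the number of Condorcet winner switches. Then σS ≤ S^CW. -/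
open scoped Classical

/-- The number of Significant Condorcet Winner Switches is at most the number of Condorcet
Winner Switches.  The significant switch times `τ̂₀ = 1 < τ̂₁ < … < τ̂_σS < T` are given
recursively: `τ̂_{i+1}` is the smallest round in `(τ̂_i, T)` such that every arm `a` has a
window `τ̂_i ≤ s₁ < s₂ < τ̂_{i+1}` with `∑_{t=s₁}^{s₂} δ_t(a_t*, a) ≥ √(K (s₂ - s₁))`. -/
theorem stmt6 {K T : ℕ} (hK : 0 < K)
    (P : ℕ → Fin K → Fin K → ℝ) (astar : ℕ → Fin K)
    (hP : ∀ t, t ∈ Finset.Icc 1 T →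
      ∀ a b, (0 ≤ P t a b ∧ P t a b ≤ 1) ∧ P t a b + P t b a = 1)
    (hCW : ∀ t, t ∈ Finset.Icc 1 T → ∀ b, b ≠ astar t → 1 / 2 < P t (astar t) b)
    (τ : ℕ → ℕ) (σS : ℕ)
    (hτ0 : τ 0 = 1)
    (hτ : ∀ i < σS,
      τ i < τ (i + 1) ∧ τ (i + 1) < T ∧
      (∀ a : Fin K, ∃ s₁ s₂ : ℕ, τ i ≤ s₁ ∧ s₁ < s₂ ∧ s₂ < τ (i + 1) ∧
        Real.sqrt ((K : ℝ) * ((s₂ : ℝ) - s₁)) ≤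
          ∑ t ∈ Finset.Icc s₁ s₂, (P t (astar t) a - 1 / 2)) ∧
      (∀ r : ℕ, τ i < r → r < τ (i + 1) →
        ¬ (∀ a : Fin K, ∃ s₁ s₂ : ℕ, τ i ≤ s₁ ∧ s₁ < s₂ ∧ s₂ < r ∧
          Real.sqrt ((K : ℝ) * ((s₂ : ℝ) - s₁)) ≤
            ∑ t ∈ Finset.Icc s₁ s₂, (P t (astar t) a - 1 / 2)))) :
    σS ≤ ∑ t ∈ Finset.Icc 2 T, if astar t ≠ astar (t - 1) then 1 else 0 := by
  -- τ is strictly monotone up to σS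
  have hmono : ∀ j, j ≤ σS → ∀ i, i < j → τ i < τ j := by
    intro j
    induction j with
    | zero => intro _ i hi; omega
    | succ n ih =>
      intro hn i hi
      have h1 : τ n < τ (n + 1) := (hτ n (by omega)).1
      rcases Nat.lt_succ_iff_lt_or_eq.mp hi with h | h
      · exact (ih (by omega) i h).trans h1
      · subst h; exact h1
  have hge1 : ∀ i, i ≤ σS → 1 ≤ τ i := by
    intro i hi
    rcases Nat.eq_zero_or_pos i with h | h
    · subst h; omega
    · have := hmono i hi 0 h; omega
  -- in each interval (τ i, τ (i+1)) there is a CW switch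
  have hexists : ∀ i, i < σS → ∃ t, τ i < t ∧ t < τ (i + 1) ∧ astar t ≠ astar (t - 1) := by
    intro i hi
    by_contra hcon
    push_neg at hcon
    obtain ⟨h1, h2, h3, _⟩ := hτ i hi
    have hτi1 : 1 ≤ τ i := hge1 i (by omega)
    have hconst : ∀ t, τ i ≤ t → t < τ (i + 1) → astar t = astar (τ i) := by
      intro t ht ht2
      induction t with
      | zero => omega
      | succ n ihn =>
        rcases eq_or_lt_of_le ht with heq | hlt
        · rw [← heq]
        · have h := hcon (n + 1) hlt ht2
          simp only [Nat.add_sub_cancel] at h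
          rw [h]
          exact ihn (by omega) (by omega)
    obtain ⟨s1, s2, hs1, hs12, hs2, hsum⟩ := h3 (astar (τ i))
    have hzero : ∀ t ∈ Finset.Icc s1 s2, P t (astar t) (astar (τ i)) - 1 / 2 = 0 := by
      intro t ht
      rw [Finset.mem_Icc] at ht
      have hc : astar t = astar (τ i) :=
        hconst t (le_trans hs1 ht.1) (lt_of_le_of_lt ht.2 hs2)
      have htT : t ∈ Finset.Icc 1 T := by
        rw [Finset.mem_Icc]; omega
      have hh := (hP t htT (astar (τ i)) (astar (τ i))).2
      rw [hc]
      linarith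
    rw [Finset.sum_eq_zero hzero] at hsum
    have hpos : (0 : ℝ) < Real.sqrt ((K : ℝ) * ((s2 : ℝ) - s1)) := by
      apply Real.sqrt_pos.mpr
      have hK' : (0 : ℝ) < (K : ℝ) := by exact_mod_cast hK
      have hs : (s1 : ℝ) < (s2 : ℝ) := by exact_mod_cast hs12
      nlinarith
    linarith
  -- pick a switch time in each interval
  have hsk : ∃ g : ℕ → ℕ, ∀ i, i < σS →
      τ i < g i ∧ g i < τ (i + 1) ∧ astar (g i) ≠ astar (g i - 1) := by
    refine ⟨fun i => if h : i < σS then (hexists i h).choose else 0, ?_⟩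
    intro i hi
    simp only [dif_pos hi]
    exact (hexists i hi).choose_spec
  obtain ⟨g, hg⟩ := hsk
  set Sw : Finset ℕ := (Finset.Icc 2 T).filter (fun t => astar t ≠ astar (t - 1)) with hSw
  have hsub : (Finset.range σS).image g ⊆ Sw := by
    intro x hx
    rw [Finset.mem_image] at hx
    obtain ⟨i, hi, rfl⟩ := hx
    rw [Finset.mem_range] at hi
    obtain ⟨hg1, hg2, hg3⟩ := hg i hi
    have hτi1 : 1 ≤ τ i := hge1 i (by omega)
    have hT : τ (i + 1) < T := (hτ i hi).2.1
    rw [hSw, Finset.mem_filter, Finset.mem_Icc]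
    exact ⟨⟨by omega, by omega⟩, hg3⟩
  have key : ∀ i j, i < j → j < σS → g i ≠ g j := by
    intro i j hlt hj
    have h1 : g i < τ (i + 1) := (hg i (by omega)).2.1
    have h2 : τ j < g j := (hg j hj).1
    have h3 : τ (i + 1) ≤ τ j := by
      rcases eq_or_lt_of_le (Nat.succ_le_of_lt hlt) with h | h
      · exact le_of_eq (congrArg τ h)
      · exact le_of_lt (hmono j (by omega) (i + 1) h)
    omega
  have hinj : Set.InjOn g (Finset.range σS) := by
    intro i hi j hj hij
    simp only [Finset.coe_range, Set.mem_Iio] at hi hj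
    by_contra hne
    rcases lt_or_gt_of_ne hne with h | h
    · exact key i j h hj hij
    · exact key j i h hi hij.symm
  have hcard : σS ≤ Sw.card := by
    calc σS = (Finset.range σS).card := (Finset.card_range σS).symm
      _ = ((Finset.range σS).image g).card := (Finset.card_image_of_injOn hinj).symm
      _ ≤ Sw.card := Finset.card_le_card hsub
  calc σS ≤ Sw.card := hcard
    _ = ∑ t ∈ Finset.Icc 2 T, if astar t ≠ astar (t - 1) then 1 else 0 := by
        rw [hSw, Finset.card_filter]
end

section
/- Let S ≥ 1 be an integer, K ≥ 1 and T > 0 real numbers, and let L₀, …, L_S > 0 be positive reals with Σ_{i=0}^{S} L_i ≤ T. Suppose V₀, …, V_{S−1} are nonnegative reals such that V_i ≥ √(K / L_i) for every 0 ≤ i ≤ S − 1. Then Σ_{i=0}^{S} K·√(L_i) ≤ K·√T + (Σ_{i=0}^{S−1} V_i)^{1/3} · K^{5/6} · T^{2/3}. -/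
/-- The Hölder-inequality step: if `L₀, …, L_S > 0` sum to at most `T` and
`V_i ≥ √(K / L_i)` for `i ≤ S - 1`, then
`∑_{i=0}^S K √(L_i) ≤ K √T + (∑_{i=0}^{S-1} V_i)^{1/3} K^{5/6} T^{2/3}`. -/
theorem stmt8 (S : ℕ) (hS : 1 ≤ S) (K T : ℝ) (hK : 1 ≤ K) (hT : 0 < T)
    (L : ℕ → ℝ) (hL : ∀ i ≤ S, 0 < L i)
    (hLsum : ∑ i ∈ Finset.range (S + 1), L i ≤ T)
    (V : ℕ → ℝ) (hV0 : ∀ i ≤ S - 1, 0 ≤ V i)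
    (hV : ∀ i ≤ S - 1, Real.sqrt (K / L i) ≤ V i) :
    ∑ i ∈ Finset.range (S + 1), K * Real.sqrt (L i) ≤
      K * Real.sqrt T +
        (∑ i ∈ Finset.range S, V i) ^ ((1 : ℝ) / 3) * K ^ ((5 : ℝ) / 6) *
          T ^ ((2 : ℝ) / 3) := by
  have hK0 : (0 : ℝ) < K := lt_of_lt_of_le one_pos hK
  have hmem : ∀ i ∈ Finset.range S, i ≤ S - 1 := fun i hi => by
    have := Finset.mem_range.mp hi; omega
  have hmem' : ∀ i ∈ Finset.range S, i ≤ S := fun i hi => by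
    have := Finset.mem_range.mp hi; omega
  have hLS : L S ≤ T := by
    refine le_trans ?_ hLsum
    exact Finset.single_le_sum (fun i hi => (hL i (by
      have := Finset.mem_range.mp hi; omega)).le) (Finset.self_mem_range_succ S)
  have hLsum' : ∑ i ∈ Finset.range S, L i ≤ T := by
    have h := Finset.sum_range_succ L S
    nlinarith [hL S le_rfl]
  have hLsum'0 : 0 ≤ ∑ i ∈ Finset.range S, L i :=
    Finset.sum_nonneg fun i hi => (hL i (hmem' i hi)).le
  rw [Finset.sum_range_succ]
  have h1 : K * Real.sqrt (L S) ≤ K * Real.sqrt T :=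
    mul_le_mul_of_nonneg_left (Real.sqrt_le_sqrt hLS) hK0.le
  -- pointwise bound
  have step1 : ∀ i ∈ Finset.range S,
      K * Real.sqrt (L i) ≤ K ^ ((5 : ℝ) / 6) *
        (V i ^ ((1 : ℝ) / 3) * L i ^ ((2 : ℝ) / 3)) := by
    intro i hi
    have hLi := hL i (hmem' i hi)
    have hVi := hV i (hmem i hi)
    have hVi0 := hV0 i (hmem i hi)
    have hcube : (Real.sqrt (K / L i)) ^ ((1 : ℝ) / 3) ≤ V i ^ ((1 : ℝ) / 3) :=
      Real.rpow_le_rpow (Real.sqrt_nonneg _) hVi (by norm_num)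
    have heq : (Real.sqrt (K / L i)) ^ ((1 : ℝ) / 3)
        = K ^ ((1 : ℝ) / 6) / L i ^ ((1 : ℝ) / 6) := by
      rw [Real.sqrt_eq_rpow, ← Real.rpow_mul (by positivity),
        Real.div_rpow hK0.le hLi.le]
      norm_num
    have hVlb : K ^ ((1 : ℝ) / 6) / L i ^ ((1 : ℝ) / 6) ≤ V i ^ ((1 : ℝ) / 3) := by
      rw [← heq]; exact hcube
    have e1 : K ^ ((5 : ℝ) / 6) *
        (K ^ ((1 : ℝ) / 6) / L i ^ ((1 : ℝ) / 6) * L i ^ ((2 : ℝ) / 3))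
        = K * Real.sqrt (L i) := by
      rw [Real.sqrt_eq_rpow]
      rw [show K ^ ((5 : ℝ) / 6) *
          (K ^ ((1 : ℝ) / 6) / L i ^ ((1 : ℝ) / 6) * L i ^ ((2 : ℝ) / 3))
          = (K ^ ((5 : ℝ) / 6) * K ^ ((1 : ℝ) / 6)) *
            (L i ^ ((2 : ℝ) / 3) / L i ^ ((1 : ℝ) / 6)) by ring]
      rw [← Real.rpow_add hK0, ← Real.rpow_sub hLi]
      norm_num
    calc K * Real.sqrt (L i)
        = K ^ ((5 : ℝ) / 6) *
          (K ^ ((1 : ℝ) / 6) / L i ^ ((1 : ℝ) / 6) * L i ^ ((2 : ℝ) / 3)) := e1.symm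
      _ ≤ K ^ ((5 : ℝ) / 6) * (V i ^ ((1 : ℝ) / 3) * L i ^ ((2 : ℝ) / 3)) := by
          apply mul_le_mul_of_nonneg_left _ (by positivity)
          exact mul_le_mul_of_nonneg_right hVlb (by positivity)
  -- Hölder
  have hpq : Real.HolderConjugate 3 (3 / 2) := Real.holderConjugate_iff.mpr ⟨by norm_num, by norm_num⟩
  have holder := Real.inner_le_Lp_mul_Lq_of_nonneg (s := Finset.range S)
    (f := fun i => V i ^ ((1 : ℝ) / 3)) (g := fun i => L i ^ ((2 : ℝ) / 3)) hpq
    (fun i hi => Real.rpow_nonneg (hV0 i (hmem i hi)) _)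
    (fun i hi => Real.rpow_nonneg (hL i (hmem' i hi)).le _)
  beta_reduce at holder
  have hfs : ∑ i ∈ Finset.range S, (V i ^ ((1 : ℝ) / 3)) ^ (3 : ℝ)
      = ∑ i ∈ Finset.range S, V i := by
    refine Finset.sum_congr rfl fun i hi => ?_
    rw [← Real.rpow_mul (hV0 i (hmem i hi))]
    norm_num
  have hgs : ∑ i ∈ Finset.range S, (L i ^ ((2 : ℝ) / 3)) ^ (3 / 2 : ℝ)
      = ∑ i ∈ Finset.range S, L i := by
    refine Finset.sum_congr rfl fun i hi => ?_
    rw [← Real.rpow_mul (hL i (hmem' i hi)).le]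
    norm_num
  rw [hfs, hgs] at holder
  have hT23 : (∑ i ∈ Finset.range S, L i) ^ (1 / (3 / 2) : ℝ) ≤ T ^ ((2 : ℝ) / 3) := by
    rw [show (1 / (3 / 2) : ℝ) = 2 / 3 by norm_num]
    exact Real.rpow_le_rpow hLsum'0 hLsum' (by norm_num)
  have hVsum0 : 0 ≤ (∑ i ∈ Finset.range S, V i) ^ ((1 : ℝ) / 3) :=
    Real.rpow_nonneg (Finset.sum_nonneg fun i hi => hV0 i (hmem i hi)) _
  have hmain : ∑ i ∈ Finset.range S, K * Real.sqrt (L i) ≤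
      (∑ i ∈ Finset.range S, V i) ^ ((1 : ℝ) / 3) * K ^ ((5 : ℝ) / 6) *
        T ^ ((2 : ℝ) / 3) := by
    calc ∑ i ∈ Finset.range S, K * Real.sqrt (L i)
        ≤ ∑ i ∈ Finset.range S, K ^ ((5 : ℝ) / 6) *
            (V i ^ ((1 : ℝ) / 3) * L i ^ ((2 : ℝ) / 3)) := Finset.sum_le_sum step1
      _ = K ^ ((5 : ℝ) / 6) *
            ∑ i ∈ Finset.range S, V i ^ ((1 : ℝ) / 3) * L i ^ ((2 : ℝ) / 3) := by
          rw [Finset.mul_sum]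
      _ ≤ K ^ ((5 : ℝ) / 6) * ((∑ i ∈ Finset.range S, V i) ^ (1 / 3 : ℝ) *
            (∑ i ∈ Finset.range S, L i) ^ (1 / (3 / 2) : ℝ)) := by
          apply mul_le_mul_of_nonneg_left holder (by positivity)
      _ ≤ K ^ ((5 : ℝ) / 6) * ((∑ i ∈ Finset.range S, V i) ^ (1 / 3 : ℝ) *
            T ^ ((2 : ℝ) / 3)) := by
          apply mul_le_mul_of_nonneg_left _ (by positivity)
          exact mul_le_mul_of_nonneg_left hT23 hVsum0
      _ = (∑ i ∈ Finset.range S, V i) ^ ((1 : ℝ) / 3) * K ^ ((5 : ℝ) / 6) *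
            T ^ ((2 : ℝ) / 3) := by ring
  linarith
end

section
/- Let u : [K] → ℝ be a utility function and let σ : ℝ → ℝ be a monotonically increasing function with 0 ≤ σ(x) ≤ 1 and σ(x) = 1 − σ(−x) for all x (so σ(0) = 1/2). Define P(a,b) = σ(u(a) − u(b)). Then P is a preference matrix on K arms satisfying strong stochastic transitivity (SST). If, in addition, σ is concave on [0, ∞), then P also satisfies the stochastic triangle inequality (STI). -/
lemma sigma_concave_key (σ : ℝ → ℝ) (hconc : ConcaveOn ℝ (Set.Ici (0 : ℝ)) σ)
    {x y : ℝ} (hx : 0 < x) (hy : 0 < y) : σ (x + y) + σ 0 ≤ σ x + σ y := by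
  have hxy : (0:ℝ) < x + y := by linarith
  set t := x / (x + y) with ht
  have ht0 : 0 ≤ t := by positivity
  have ht1 : t ≤ 1 := by
    rw [ht, div_le_one hxy]; linarith
  have hmem : (x + y) ∈ Set.Ici (0:ℝ) := le_of_lt hxy
  have hmem0 : (0:ℝ) ∈ Set.Ici (0:ℝ) := Set.mem_Ici.mpr le_rfl
  have h1 : t * σ (x + y) + (1 - t) * σ 0 ≤ σ (t * (x + y) + (1 - t) * 0) :=
    hconc.2 hmem hmem0 ht0 (by linarith) (by ring)
  have h2 : (1 - t) * σ (x + y) + t * σ 0 ≤ σ ((1 - t) * (x + y) + t * 0) :=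
    hconc.2 hmem hmem0 (by linarith) ht0 (by ring)
  have e1 : t * (x + y) + (1 - t) * 0 = x := by
    rw [ht, mul_zero, add_zero, div_mul_cancel₀ x hxy.ne']
  have e2 : (1 - t) * (x + y) + t * 0 = y := by
    rw [ht, mul_zero, add_zero, sub_mul, one_mul, div_mul_cancel₀ x hxy.ne']; ring
  rw [e1] at h1; rw [e2] at h2
  nlinarith [h1, h2]

/-- A utility-based preference model `P(a,b) = σ(u(a) - u(b))` with a monotonically
increasing link function `σ` taking values in `[0,1]` and satisfying `σ(x) = 1 - σ(-x)`
is a preference matrix satisfying strong stochastic transitivity (SST); if moreover `σ` is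
concave on `[0, ∞)`, it also satisfies the stochastic triangle inequality (STI). -/
theorem stmt11 {K : ℕ} (u : Fin K → ℝ) (σ : ℝ → ℝ)
    (hmono : Monotone σ) (h01 : ∀ x, 0 ≤ σ x ∧ σ x ≤ 1)
    (hsymm : ∀ x, σ x = 1 - σ (-x)) :
    (∀ a b : Fin K, 0 ≤ σ (u a - u b) ∧ σ (u a - u b) ≤ 1) ∧
    (∀ a b : Fin K, σ (u a - u b) + σ (u b - u a) = 1) ∧
    (∀ a b c : Fin K, 1 / 2 < σ (u a - u b) → 1 / 2 < σ (u b - u c) →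
      max (σ (u a - u b) - 1 / 2) (σ (u b - u c) - 1 / 2) ≤ σ (u a - u c) - 1 / 2) ∧
    (ConcaveOn ℝ (Set.Ici (0 : ℝ)) σ →
      ∀ a b c : Fin K, 1 / 2 < σ (u a - u b) → 1 / 2 < σ (u b - u c) →
        σ (u a - u c) - 1 / 2 ≤
          (σ (u a - u b) - 1 / 2) + (σ (u b - u c) - 1 / 2)) := by
  have hzero : σ 0 = 1 / 2 := by have := hsymm 0; simp at this; linarith
  have hpos : ∀ x : ℝ, 1 / 2 < σ x → 0 < x := by
    intro x hx
    by_contra h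
    push_neg at h
    have := hmono h
    rw [hzero] at this
    linarith
  refine ⟨fun a b => h01 _, fun a b => ?_, fun a b c hab hbc => ?_, fun hconc a b c hab hbc => ?_⟩
  · have := hsymm (u a - u b)
    have h2 : -(u a - u b) = u b - u a := by ring
    rw [h2] at this; linarith
  · have h1 : 0 < u a - u b := hpos _ hab
    have h2 : 0 < u b - u c := hpos _ hbc
    have e1 : σ (u a - u b) ≤ σ (u a - u c) := hmono (by linarith)
    have e2 : σ (u b - u c) ≤ σ (u a - u c) := hmono (by linarith)
    exact max_le (by linarith) (by linarith)
  · have h1 : 0 < u a - u b := hpos _ hab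
    have h2 : 0 < u b - u c := hpos _ hbc
    have key := sigma_concave_key σ hconc h1 h2
    have e : u a - u b + (u b - u c) = u a - u c := by ring
    rw [e, hzero] at key
    linarith
end

section
/- Let s < e be natural numbers, let A ≥ 0 be a real number, let (x_t)_{s ≤ t ≤ e} be real numbers, and set m = ⌈(s + e)/2⌉. If Σ_{t=s}^{e} x_t > A·√(e − s) and Σ_{t=s}^{m−1} x_t ≤ A·√((m − 1) − s), then Σ_{t=m}^{e} x_t ≥ (A/4)·√(e − m). -/
lemma sqrt_aux (a b : ℝ) (ha : 0 ≤ a) (hab : a ≤ b) :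
    Real.sqrt a + 1 / 4 * Real.sqrt b ≤ Real.sqrt (a + b + 1) := by
  have hb : 0 ≤ b := le_trans ha hab
  have hnn : 0 ≤ Real.sqrt a + 1 / 4 * Real.sqrt b := by positivity
  have hsq : (Real.sqrt a + 1 / 4 * Real.sqrt b) ^ 2 ≤ a + b + 1 := by
    have h1 : Real.sqrt a * Real.sqrt b ≤ b := by
      calc Real.sqrt a * Real.sqrt b ≤ Real.sqrt b * Real.sqrt b :=
            mul_le_mul_of_nonneg_right (Real.sqrt_le_sqrt hab) (Real.sqrt_nonneg b)
        _ = b := Real.mul_self_sqrt hb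
    have h2 : Real.sqrt a ^ 2 = a := Real.sq_sqrt ha
    have h3 : Real.sqrt b ^ 2 = b := Real.sq_sqrt hb
    nlinarith [Real.sqrt_nonneg a, Real.sqrt_nonneg b]
  calc Real.sqrt a + 1 / 4 * Real.sqrt b
      = Real.sqrt ((Real.sqrt a + 1 / 4 * Real.sqrt b) ^ 2) := (Real.sqrt_sq hnn).symm
    _ ≤ Real.sqrt (a + b + 1) := Real.sqrt_le_sqrt hsq

/-- If an arm accumulates regret more than `A √(e - s)` over a bad segment `[s, e]` but at
most `A √((m-1) - s)` over its first half `[s, m-1]`, where `m = ⌈(s+e)/2⌉` is the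
midpoint, then it accumulates regret at least `(A/4) √(e - m)` over the second half
`[m, e]`. -/
theorem stmt13 (s e m : ℕ) (hse : s < e) (hm : m = (s + e + 1) / 2)
    (A : ℝ) (hA : 0 ≤ A) (x : ℕ → ℝ)
    (h1 : A * Real.sqrt ((e : ℝ) - s) < ∑ t ∈ Finset.Icc s e, x t)
    (h2 : ∑ t ∈ Finset.Icc s (m - 1), x t ≤ A * Real.sqrt (((m : ℝ) - 1) - s)) :
    A / 4 * Real.sqrt ((e : ℝ) - m) ≤ ∑ t ∈ Finset.Icc m e, x t := by
  -- basic nat facts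
  have hm1 : s + 1 ≤ m := by omega
  have hme : m ≤ e := by omega
  have h2m : 2 * m ≤ s + e + 1 := by omega
  -- split the sum
  have hsplit : ∑ t ∈ Finset.Icc s e, x t
      = (∑ t ∈ Finset.Icc s (m - 1), x t) + ∑ t ∈ Finset.Icc m e, x t := by
    rw [← Finset.Ico_add_one_right_eq_Icc s e, ← Finset.Ico_add_one_right_eq_Icc m e, ← Finset.Ico_add_one_right_eq_Icc s (m-1)]
    have : m - 1 + 1 = m := by omega
    simp only [Nat.succ_eq_add_one, this]
    exact (Finset.sum_Ico_consecutive _ (by omega) (by omega)).symm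
  -- real facts
  set a : ℝ := ((m : ℝ) - 1) - s with hadef
  set b : ℝ := (e : ℝ) - m with hbdef
  have ha : 0 ≤ a := by
    have : (s : ℝ) + 1 ≤ m := by exact_mod_cast hm1
    simp only [hadef]; linarith
  have hab : a ≤ b := by
    have : (2 : ℝ) * m ≤ s + e + 1 := by exact_mod_cast h2m
    simp only [hadef, hbdef]; linarith
  have hn : (e : ℝ) - s = a + b + 1 := by simp only [hadef, hbdef]; ring
  have key : Real.sqrt a + 1 / 4 * Real.sqrt b ≤ Real.sqrt ((e : ℝ) - s) := by
    rw [hn]; exact sqrt_aux a b ha hab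
  have key' : A * Real.sqrt a + A / 4 * Real.sqrt b ≤ A * Real.sqrt ((e : ℝ) - s) := by
    have := mul_le_mul_of_nonneg_left key hA
    nlinarith
  linarith [hsplit, h1, h2]
end

section
/- Let t₀ < S be natural numbers and let (s_j, e_j, m_j)_{j=1}^{J} be triples of natural numbers satisfying t₀ < s_j < e_j ≤ S and e_j − s_j ≤ m_j ≤ 2(e_j − s_j) for each j, and set s̃_j = ⌈(s_j + e_j)/2⌉. Then Σ_{j=1}^{J} Σ_{s=s_j}^{s̃_j} 1/√(m_j · (s − t₀)) ≥ (1/4) · Σ_{j=1}^{J} √((e_j − s_j)/(S − t₀)). -/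
set_option maxHeartbeats 1000000 in
lemma aux17 (t₀ S s e m : ℕ) (h1 : t₀ < s) (h2 : s < e) (h3 : e ≤ S)
    (hm1 : e - s ≤ m) (hm2 : m ≤ 2 * (e - s)) :
    (1 / 4 : ℝ) * Real.sqrt (((e : ℝ) - s) / ((S : ℝ) - t₀)) ≤
      ∑ r ∈ Finset.Icc s ((s + e + 1) / 2),
        1 / Real.sqrt ((m : ℝ) * ((r : ℝ) - t₀)) := by
  set s' := (s + e + 1) / 2 with hs'
  have hs'e : s' ≤ e := by omega
  have hss' : s ≤ s' := by omega
  set L : ℝ := (e : ℝ) - s with hLdef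
  set D : ℝ := (S : ℝ) - t₀ with hDdef
  have hL : (1 : ℝ) ≤ L := by
    have : (s : ℝ) + 1 ≤ e := by exact_mod_cast h2
    simp only [hLdef]; linarith
  have hD : (1 : ℝ) ≤ D := by
    have : (t₀ : ℝ) + 1 ≤ S := by exact_mod_cast (lt_of_lt_of_le (h1.trans h2) h3)
    simp only [hDdef]; linarith
  have hLpos : 0 < L := by linarith
  have hDpos : 0 < D := by linarith
  have hc : ∀ r ∈ Finset.Icc s s',
      1 / Real.sqrt (2 * L * D) ≤ 1 / Real.sqrt ((m : ℝ) * ((r : ℝ) - t₀)) := by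
    intro r hr
    rw [Finset.mem_Icc] at hr
    have hr1 : (t₀ : ℝ) + 1 ≤ r := by exact_mod_cast (lt_of_lt_of_le h1 hr.1)
    have hr2 : (r : ℝ) ≤ S := by exact_mod_cast le_trans hr.2 (le_trans hs'e h3)
    have hmL : (m : ℝ) ≤ 2 * L := by
      have : (m : ℝ) ≤ 2 * ((e : ℝ) - s) := by
        have h' : (m : ℝ) ≤ (2 * (e - s) : ℕ) := by exact_mod_cast hm2
        have : ((2 * (e - s) : ℕ) : ℝ) = 2 * ((e : ℝ) - s) := by
          push_cast [Nat.cast_sub h2.le]; ring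
        linarith [this ▸ h']
      simpa [hLdef] using this
    have hm0 : (1 : ℝ) ≤ m := by
      have : 1 ≤ m := by omega
      exact_mod_cast this
    have hprodpos : 0 < (m : ℝ) * ((r : ℝ) - t₀) := by nlinarith
    have hle : (m : ℝ) * ((r : ℝ) - t₀) ≤ 2 * L * D := by
      have h4 : (r : ℝ) - t₀ ≤ D := by simp only [hDdef]; linarith
      nlinarith
    exact one_div_le_one_div_of_le (Real.sqrt_pos.mpr hprodpos) (Real.sqrt_le_sqrt hle)
  have hsum : ((Finset.Icc s s').card : ℝ) * (1 / Real.sqrt (2 * L * D)) ≤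
      ∑ r ∈ Finset.Icc s s', 1 / Real.sqrt ((m : ℝ) * ((r : ℝ) - t₀)) := by
    calc ((Finset.Icc s s').card : ℝ) * (1 / Real.sqrt (2 * L * D))
        = ∑ _r ∈ Finset.Icc s s', 1 / Real.sqrt (2 * L * D) := by
          rw [Finset.sum_const, nsmul_eq_mul]
      _ ≤ _ := Finset.sum_le_sum hc
  have hcard : L / 2 ≤ ((Finset.Icc s s').card : ℝ) := by
    rw [Nat.card_Icc]
    have hn : e - s ≤ 2 * (s' + 1 - s) := by omega
    have : L ≤ 2 * ((s' + 1 - s : ℕ) : ℝ) := by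
      have h' : ((e - s : ℕ) : ℝ) ≤ ((2 * (s' + 1 - s) : ℕ) : ℝ) := by exact_mod_cast hn
      have he : ((e - s : ℕ) : ℝ) = L := by
        simp only [hLdef]; push_cast [Nat.cast_sub h2.le]; ring
      push_cast at h' ⊢
      linarith [he ▸ h']
    linarith
  have hsqrt2 : Real.sqrt 2 ≤ 2 := by
    nlinarith [Real.sq_sqrt (show (0:ℝ) ≤ 2 by norm_num), Real.sqrt_nonneg 2]
  have hsqrt2pos : (1 : ℝ) ≤ Real.sqrt 2 := by
    nlinarith [Real.sq_sqrt (show (0:ℝ) ≤ 2 by norm_num), Real.sqrt_nonneg 2]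
  have ha : 1 ≤ Real.sqrt L := by
    rw [show (1:ℝ) = Real.sqrt 1 by simp]; exact Real.sqrt_le_sqrt hL
  have hd : 1 ≤ Real.sqrt D := by
    rw [show (1:ℝ) = Real.sqrt 1 by simp]; exact Real.sqrt_le_sqrt hD
  have key : (1 / 4 : ℝ) * Real.sqrt (L / D) ≤ L / 2 * (1 / Real.sqrt (2 * L * D)) := by
    have e1 : Real.sqrt (L / D) = Real.sqrt L / Real.sqrt D := Real.sqrt_div hLpos.le D
    have e2 : Real.sqrt (2 * L * D) = Real.sqrt 2 * Real.sqrt L * Real.sqrt D := by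
      rw [Real.sqrt_mul (by positivity : (0:ℝ) ≤ 2 * L),
          Real.sqrt_mul (by norm_num : (0:ℝ) ≤ 2)]
    have hLe : L = Real.sqrt L * Real.sqrt L := (Real.mul_self_sqrt hLpos.le).symm
    have hL0 : (0:ℝ) < Real.sqrt L := by linarith
    have hD0 : (0:ℝ) < Real.sqrt D := by linarith
    rw [e1, e2]
    have e3 : (1 / 4 : ℝ) * (Real.sqrt L / Real.sqrt D) = Real.sqrt L / (4 * Real.sqrt D) := by
      ring
    have e4 : L / 2 * (1 / (Real.sqrt 2 * Real.sqrt L * Real.sqrt D)) =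
        L / (2 * Real.sqrt 2 * Real.sqrt L * Real.sqrt D) := by ring
    rw [e3, e4, div_le_div_iff₀ (by positivity) (by positivity)]
    have h5 : 2 * Real.sqrt 2 * (Real.sqrt L * Real.sqrt L) * Real.sqrt D ≤
        4 * (Real.sqrt L * Real.sqrt L) * Real.sqrt D := by
      nlinarith [mul_nonneg (sub_nonneg.mpr hsqrt2) (mul_pos (mul_pos hL0 hL0) hD0).le]
    calc Real.sqrt L * (2 * Real.sqrt 2 * Real.sqrt L * Real.sqrt D)
        = 2 * Real.sqrt 2 * (Real.sqrt L * Real.sqrt L) * Real.sqrt D := by ring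
      _ ≤ 4 * (Real.sqrt L * Real.sqrt L) * Real.sqrt D := h5
      _ = L * (4 * Real.sqrt D) := by rw [← hLe]; ring
  calc (1 / 4 : ℝ) * Real.sqrt (L / D) ≤ L / 2 * (1 / Real.sqrt (2 * L * D)) := key
    _ ≤ ((Finset.Icc s s').card : ℝ) * (1 / Real.sqrt (2 * L * D)) := by
        apply mul_le_mul_of_nonneg_right hcard; positivity
    _ ≤ _ := hsum

/-- The expected number of perfectly timed replays is lower-bounded: for bad segments
`[s_j, e_j) ⊆ (t₀, S]` with dyadic replay lengths `e_j - s_j ≤ m_j ≤ 2 (e_j - s_j)` and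
midpoints `s̃_j = ⌈(s_j + e_j)/2⌉`,
`∑_j ∑_{s=s_j}^{s̃_j} 1/√(m_j (s - t₀)) ≥ (1/4) ∑_j √((e_j - s_j)/(S - t₀))`. -/
theorem stmt17 (t₀ S : ℕ) (htS : t₀ < S) (J : ℕ) (s e m : ℕ → ℕ)
    (hs : ∀ j < J, t₀ < s j) (hse : ∀ j < J, s j < e j) (heS : ∀ j < J, e j ≤ S)
    (hm1 : ∀ j < J, e j - s j ≤ m j) (hm2 : ∀ j < J, m j ≤ 2 * (e j - s j)) :
    (1 / 4 : ℝ) * ∑ j ∈ Finset.range J,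
        Real.sqrt (((e j : ℝ) - s j) / ((S : ℝ) - t₀)) ≤
      ∑ j ∈ Finset.range J, ∑ r ∈ Finset.Icc (s j) ((s j + e j + 1) / 2),
        1 / Real.sqrt ((m j : ℝ) * ((r : ℝ) - t₀)) := by
  rw [Finset.mul_sum]
  apply Finset.sum_le_sum
  intro j hj
  rw [Finset.mem_range] at hj
  exact aux17 t₀ S (s j) (e j) (m j) (hs j hj) (hse j hj) (heS j hj) (hm1 j hj) (hm2 j hj)
end
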